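/- Let Q be a compact rectangle in ℝ² of width w and height h. For every λ > 0, the number of pairs of positive integers (m,n) with π²(m²/w² + n²/h²) ≤ λ is at least (wh)λ/(4π) − (w+h)λ^{1/2}/2. -/

import Mathlib

open Real

private theorem quarter : ∫ x in (0:ℝ)..1, Real.sqrt (1 - x^2) = π/4 := by
  have h2 := integral_sqrt_one_sub_sq
  have hc : Continuous (fun x : ℝ => Real.sqrt (1 - x^2)) :=
    (continuous_const.sub (continuous_pow 2)).sqrt
  have hsymm : (∫ x in (-1:ℝ)..0, Real.sqrt (1-x^2)) = ∫ x in (0:ℝ)..1, Real.sqrt (1-x^2) := by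
    have := intervalIntegral.integral_comp_neg (a := (0:ℝ)) (b := 1)
      (f := fun x => Real.sqrt (1-x^2))
    simp only [neg_sq, neg_zero] at this
    exact this.symm
  have hsplit := intervalIntegral.integral_add_adjacent_intervals
    (hc.intervalIntegrable (μ := MeasureTheory.volume) (-1) 0) (hc.intervalIntegrable 0 1)
  rw [hsymm] at hsplit
  rw [← hsplit] at h2
  linarith

set_option maxHeartbeats 1000000 in
/-- single-rectangle Dirichlet eigenvalue counting lower bound. -/
theorem stmt_3 (w h lam : ℝ) (hw : 0 < w) (hh : 0 < h) (hlam : 0 < lam) :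
    (Nat.card {p : ℕ × ℕ // 0 < p.1 ∧ 0 < p.2 ∧
        π^2 * ((p.1:ℝ)^2/w^2 + (p.2:ℝ)^2/h^2) ≤ lam} : ℝ)
      ≥ w*h*lam/(4*π) - (w+h)*Real.sqrt lam/2 := by
  classical
  by_cases hRHS : w*h*lam/(4*π) - (w+h)*Real.sqrt lam/2 ≤ 0
  · exact le_trans hRHS (Nat.cast_nonneg _)
  push_neg at hRHS
  have hπ := pi_pos
  have hsl : 0 < Real.sqrt lam := Real.sqrt_pos.2 hlam
  have hsq : Real.sqrt lam ^ 2 = lam := Real.sq_sqrt hlam.le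
  set A := w * Real.sqrt lam / π with hAdef
  set B := h * Real.sqrt lam / π with hBdef
  have hA0 : 0 < A := by positivity
  have hB0 : 0 < B := by positivity
  have hAsq : A^2 = w^2 * lam / π^2 := by
    rw [hAdef, div_pow, mul_pow, hsq]
  have hBsq : B^2 = h^2 * lam / π^2 := by
    rw [hBdef, div_pow, mul_pow, hsq]
  have hcore : (w+h)*Real.sqrt lam/2 < w*h*lam/(4*π) := sub_pos.mp hRHS
  rw [div_lt_div_iff₀ two_pos (by positivity : (0:ℝ) < 4*π)] at hcore
  have hcore' : (w+h)*Real.sqrt lam*(4*π) < w*h*(Real.sqrt lam^2)*2 := by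
    rw [hsq]; exact hcore
  have hA2gt : 2 < A := by
    rw [hAdef, lt_div_iff₀ hπ]
    nlinarith [hcore', mul_pos hw hsl, mul_pos hh hsl]
  have hB2gt : 2 < B := by
    rw [hBdef, lt_div_iff₀ hπ]
    nlinarith [hcore', mul_pos hw hsl, mul_pos hh hsl]
  have h1A : (1:ℝ) ≤ A := by linarith
  have key : ∀ m n : ℕ, (π^2 * ((m:ℝ)^2/w^2 + (n:ℝ)^2/h^2) ≤ lam ↔
      (m:ℝ)^2/A^2 + (n:ℝ)^2/B^2 ≤ 1) := by
    intro m n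
    have heq : (m:ℝ)^2/A^2 + (n:ℝ)^2/B^2 = π^2*((m:ℝ)^2/w^2 + (n:ℝ)^2/h^2)/lam := by
      rw [hAsq, hBsq]
      field_simp
    rw [heq, div_le_one hlam]
  set M := ⌊A⌋₊ with hMdef
  set N := ⌊B⌋₊ with hNdef
  have hMA : (M:ℝ) ≤ A := Nat.floor_le hA0.le
  have hAM1 : A < M + 1 := Nat.lt_floor_add_one A
  set S : Finset (ℕ × ℕ) := (Finset.Icc 1 M ×ˢ Finset.Icc 1 N).filter
    (fun p => π^2*((p.1:ℝ)^2/w^2 + (p.2:ℝ)^2/h^2) ≤ lam) with hSdef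
  have hle_of_sq : ∀ (x C : ℝ), 0 ≤ x → 0 < C → x^2/C^2 ≤ 1 → x ≤ C := by
    intro x C hx hC hxC
    have : x^2 ≤ C^2 := by
      rw [div_le_one (by positivity)] at hxC; exact hxC
    exact le_of_pow_le_pow_left₀ two_ne_zero hC.le this
  have hmemS : ∀ p : ℕ × ℕ, p ∈ S ↔ (0 < p.1 ∧ 0 < p.2 ∧
      π^2*((p.1:ℝ)^2/w^2 + (p.2:ℝ)^2/h^2) ≤ lam) := by
    intro p
    simp only [hSdef, Finset.mem_filter, Finset.mem_product, Finset.mem_Icc]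
    constructor
    · rintro ⟨⟨⟨h1, _⟩, ⟨h2, _⟩⟩, h3⟩
      exact ⟨h1, h2, h3⟩
    · rintro ⟨h1, h2, h3⟩
      have h3' := (key p.1 p.2).mp h3
      have hm2 : (0:ℝ) ≤ (p.1:ℝ)^2/A^2 := by positivity
      have hn2 : (0:ℝ) ≤ (p.2:ℝ)^2/B^2 := by positivity
      have hm : (p.1:ℝ) ≤ A := hle_of_sq _ _ (Nat.cast_nonneg _) hA0 (by linarith)
      have hn : (p.2:ℝ) ≤ B := hle_of_sq _ _ (Nat.cast_nonneg _) hB0 (by linarith)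
      exact ⟨⟨⟨h1, Nat.le_floor hm⟩, ⟨h2, Nat.le_floor hn⟩⟩, h3⟩
  have hcard : (Nat.card {p : ℕ × ℕ // 0 < p.1 ∧ 0 < p.2 ∧
      π^2 * ((p.1:ℝ)^2/w^2 + (p.2:ℝ)^2/h^2) ≤ lam}) = S.card := by
    have hseteq : {p : ℕ × ℕ | 0 < p.1 ∧ 0 < p.2 ∧
        π^2 * ((p.1:ℝ)^2/w^2 + (p.2:ℝ)^2/h^2) ≤ lam} = ↑S := by
      ext p; simp [hmemS p]
    rw [show {p : ℕ × ℕ // 0 < p.1 ∧ 0 < p.2 ∧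
        π^2 * ((p.1:ℝ)^2/w^2 + (p.2:ℝ)^2/h^2) ≤ lam} = ↥{p : ℕ × ℕ | 0 < p.1 ∧ 0 < p.2 ∧
        π^2 * ((p.1:ℝ)^2/w^2 + (p.2:ℝ)^2/h^2) ≤ lam} from rfl,
      Nat.card_coe_set_eq, hseteq, Set.ncard_coe_finset]
  -- the profile function
  set g : ℝ → ℝ := fun x => B * Real.sqrt (1 - x^2/A^2) with hgdef
  have hgcont : Continuous g :=
    continuous_const.mul ((continuous_const.sub ((continuous_pow 2).div_const _)).sqrt)
  have hgnonneg : ∀ x, 0 ≤ g x := fun x => by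
    exact mul_nonneg hB0.le (Real.sqrt_nonneg _)
  have hgleB : ∀ x, g x ≤ B := fun x => by
    rw [hgdef]
    have h1 : Real.sqrt (1 - x^2/A^2) ≤ 1 := by
      rw [show (Real.sqrt (1 - x^2/A^2) ≤ 1) ↔ (1 - x^2/A^2 ≤ 1) from Real.sqrt_le_one]
      have : (0:ℝ) ≤ x^2/A^2 := by positivity
      linarith
    nlinarith [Real.sqrt_nonneg (1 - x^2/A^2)]
  have hganti : AntitoneOn g (Set.Icc (1:ℝ) (1 + M)) := by
    intro x hx y hy hxy
    have hx0 : 0 ≤ x := le_trans zero_le_one hx.1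
    have hxy2 : x^2/A^2 ≤ y^2/A^2 :=
      div_le_div_of_nonneg_right (pow_le_pow_left₀ hx0 hxy 2) (by positivity)
    exact mul_le_mul_of_nonneg_left (Real.sqrt_le_sqrt (sub_le_sub_left hxy2 1)) hB0.le
  -- fiber bound
  have hfiber : ∀ m ∈ Finset.Icc 1 M, ⌊g m⌋₊ ≤ (S.filter (fun p => p.1 = m)).card := by
    intro m hm
    rw [Finset.mem_Icc] at hm
    have hmA : (m:ℝ) ≤ A := le_trans (Nat.cast_le.mpr hm.2) hMA
    have harg : 0 ≤ 1 - (m:ℝ)^2/A^2 := by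
      have h1 : (m:ℝ)^2/A^2 ≤ 1 := by
        rw [div_le_one (by positivity)]
        exact pow_le_pow_left₀ (Nat.cast_nonneg _) hmA 2
      linarith
    have hgsq : (g m)^2 = B^2 * (1 - (m:ℝ)^2/A^2) := by
      rw [hgdef, mul_pow, Real.sq_sqrt harg]
    have hmem : ∀ n ∈ Finset.Icc 1 ⌊g m⌋₊,
        (fun n => ((m : ℕ), n)) n ∈ S.filter (fun p => p.1 = m) := by
      intro n hn
      rw [Finset.mem_Icc] at hn
      have hng : (n:ℝ) ≤ g m := le_trans (Nat.cast_le.mpr hn.2) (Nat.floor_le (hgnonneg _))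
      have hn2 : (n:ℝ)^2 ≤ B^2 * (1 - (m:ℝ)^2/A^2) := by
        rw [← hgsq]; exact pow_le_pow_left₀ (Nat.cast_nonneg _) hng 2
      have hnB : (n:ℝ)^2/B^2 ≤ 1 - (m:ℝ)^2/A^2 := by
        rw [div_le_iff₀ (by positivity)]; linarith
      have hcond : (m:ℝ)^2/A^2 + (n:ℝ)^2/B^2 ≤ 1 := by linarith
      rw [Finset.mem_filter]
      exact ⟨(hmemS (m, n)).mpr ⟨hm.1, hn.1, (key m n).mpr hcond⟩, rfl⟩
    have hinj : Set.InjOn (fun n => ((m : ℕ), n)) (↑(Finset.Icc 1 ⌊g (m:ℝ)⌋₊) : Set ℕ) := by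
      intro a _ b _ hab
      simpa using hab
    have := Finset.card_le_card_of_injOn _ hmem hinj
    simpa using this
  have hsumcard : ∑ m ∈ Finset.Icc 1 M, ⌊g m⌋₊ ≤ S.card := by
    rw [Finset.card_eq_sum_card_fiberwise (f := Prod.fst) (t := Finset.Icc 1 M)
      (fun p hp => by
        simp only [hSdef, Finset.mem_coe, Finset.mem_filter, Finset.mem_product] at hp ⊢
        exact hp.1.1)]
    exact Finset.sum_le_sum hfiber
  have hcast : (∑ m ∈ Finset.Icc 1 M, g m) - M ≤ (S.card : ℝ) := by
    have h1 : (∑ m ∈ Finset.Icc 1 M, g m) - M = ∑ m ∈ Finset.Icc 1 M, (g m - 1) := by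
      rw [Finset.sum_sub_distrib, Finset.sum_const, Nat.card_Icc]
      simp
    rw [h1]
    calc ∑ m ∈ Finset.Icc 1 M, (g m - 1)
        ≤ ∑ m ∈ Finset.Icc 1 M, (⌊g m⌋₊ : ℝ) :=
          Finset.sum_le_sum (fun m _ => (Nat.sub_one_lt_floor (g m)).le)
      _ = ((∑ m ∈ Finset.Icc 1 M, ⌊g m⌋₊ : ℕ) : ℝ) := by push_cast; rfl
      _ ≤ S.card := Nat.cast_le.mpr hsumcard
  have hsum_int : (∫ x in (1:ℝ)..(1 + M), g x) ≤ ∑ m ∈ Finset.Icc 1 M, g m := by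
    refine le_trans hganti.integral_le_sum (le_of_eq ?_)
    rw [show Finset.Icc 1 M = Finset.Ico 1 (M+1) from (Finset.Ico_add_one_right_eq_Icc 1 M).symm,
      Finset.sum_Ico_eq_sum_range]
    simp only [Nat.add_sub_cancel]
    apply (Finset.sum_congr rfl ?_).symm
    intro i _
    push_cast
    ring_nf
  have hint_full : ∫ x in (0:ℝ)..A, g x = A * B * (π/4) := by
    have hdp : ∀ x : ℝ, x^2/A^2 = (x/A)^2 := fun x => (div_pow x A 2).symm
    have hrw : ∀ x : ℝ, g x = B * Real.sqrt (1 - (x/A)^2) := by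
      intro x; rw [hgdef]; simp only [hdp]
    simp only [hrw]
    rw [intervalIntegral.integral_const_mul,
      intervalIntegral.integral_comp_div (f := fun u => Real.sqrt (1 - u^2)) hA0.ne',
      zero_div, div_self hA0.ne', smul_eq_mul, quarter]
    ring
  have hi01 : ∫ x in (0:ℝ)..1, g x ≤ B := by
    have := intervalIntegral.integral_mono_on (a := (0:ℝ)) (b := 1) zero_le_one
      (hgcont.intervalIntegrable (μ := MeasureTheory.volume) 0 1) intervalIntegrable_const (fun x _ => hgleB x)
    simpa using this
  have hsplit01 : (∫ x in (0:ℝ)..1, g x) + (∫ x in (1:ℝ)..A, g x) = ∫ x in (0:ℝ)..A, g x :=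
    intervalIntegral.integral_add_adjacent_intervals (hgcont.intervalIntegrable _ _)
      (hgcont.intervalIntegrable _ _)
  have hsplitA : (∫ x in (1:ℝ)..A, g x) + (∫ x in A..(1 + M), g x) = ∫ x in (1:ℝ)..(1 + M), g x :=
    intervalIntegral.integral_add_adjacent_intervals (hgcont.intervalIntegrable _ _)
      (hgcont.intervalIntegrable _ _)
  have htail : 0 ≤ ∫ x in A..(1 + (M:ℝ)), g x :=
    intervalIntegral.integral_nonneg (by linarith) (fun x _ => hgnonneg x)
  rw [hcard]
  have hfinal : A * B * (π/4) - B - A ≤ (S.card : ℝ) := by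
    linarith [hcast, hsum_int, hi01, htail, hsplit01, hsplitA, hint_full, hMA]
  have hABeq : A * B * (π/4) = w*h*lam/(4*π) := by
    have hab : A * B = w*h*lam/π^2 := by
      rw [hAdef, hBdef, div_mul_div_comm,
        show w*Real.sqrt lam*(h*Real.sqrt lam) = w*h*(Real.sqrt lam^2) by ring, hsq,
        show π*π = π^2 by ring]
    rw [hab, div_mul_div_comm, show π^2*4 = π*(4*π) by ring, mul_comm (w*h*lam) π,
      mul_div_mul_left _ _ hπ.ne']
  have hπ2 : (2:ℝ) ≤ π := by linarith [Real.pi_gt_three]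
  have hsumAB : A + B ≤ (w+h)*Real.sqrt lam/2 := by
    rw [hAdef, hBdef, ← add_div, ← add_mul]
    gcongr

  linarith [hfinal, hABeq, hsumAB]
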